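/- Under the FISTA setup (f convex β-smooth, g convex lsc proper, F = f + g with minimizer set S nonempty, μ = min F, parameters t_k with t_0 = 1, t_k ≥ (k+2)/2, t_k² ≥ t_{k+1}² − t_{k+1}, iterates x_{k+1} = T y_k, y_{k+1} = x_{k+1} + ((t_k−1)/t_{k+1})(x_{k+1} − x_k), auxiliary z_k = (1−t_k)x_k + t_k y_k), for every s ∈ S the quantities ξ_{k+1}(s) := t_k² (F(x_{k+1}) − μ) + (β/2)‖z_{k+1} − s‖² satisfy 0 ≤ ξ_{k+1}(s) ≤ ξ_k(s) ≤ … ≤ ξ_1(s) ≤ (β/2)‖x_0 − s‖². Consequently (ξ_k(s)) converges and (z_k) is bounded. -/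

import Mathlib

open Filter
open scoped RealInnerProductSpace

section Helpers

variable {X : Type*} [NormedAddCommGroup X] [InnerProductSpace ℝ X] [CompleteSpace X]

lemma fista_line_hasDerivAt (f : X → ℝ) (f' : X → X) (hf' : ∀ x, HasGradientAt f (f' x) x)
    (y v : X) (τ : ℝ) :
    HasDerivAt (fun τ : ℝ => f (y + τ • v)) ⟪f' (y + τ • v), v⟫ τ := by
  have hc : HasDerivAt (fun τ : ℝ => y + τ • v) v τ := by
    simpa using ((hasDerivAt_id τ).smul_const v).const_add y
  have hfd := hasGradientAt_iff_hasFDerivAt.1 (hf' (y + τ • v))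
  exact (by simpa [InnerProductSpace.toDual_apply_apply] using hfd.comp_hasDerivAt τ hc : HasDerivAt (f ∘ fun τ : ℝ => y + τ • v) _ τ)

lemma fista_convex_grad_ineq (f : X → ℝ) (hf : ConvexOn ℝ Set.univ f) (f' : X → X)
    (hf' : ∀ x, HasGradientAt f (f' x) x) (a b : X) :
    f a + ⟪f' a, b - a⟫ ≤ f b := by
  set v := b - a with hv
  have hd : HasDerivAt (fun τ : ℝ => f (a + τ • v)) ⟪f' a, v⟫ 0 := by
    simpa using fista_line_hasDerivAt f f' hf' a v 0
  have hslope := hasDerivAt_iff_tendsto_slope.1 hd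
  have htend : Filter.Tendsto (slope (fun τ : ℝ => f (a + τ • v)) 0)
      (nhdsWithin 0 (Set.Ioi 0)) (nhds ⟪f' a, v⟫) :=
    hslope.mono_left (nhdsWithin_mono _ (by intro τ hτ; exact ne_of_gt hτ))
  have hbound : ∀ᶠ τ in nhdsWithin (0:ℝ) (Set.Ioi 0),
      slope (fun τ : ℝ => f (a + τ • v)) 0 τ ≤ f b - f a := by
    filter_upwards [Ioc_mem_nhdsGT_of_mem ⟨le_refl (0:ℝ), one_pos⟩] with τ hτ
    obtain ⟨h0, h1⟩ := hτ
    have hcvx := hf.2 (Set.mem_univ a) (Set.mem_univ b)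
      (by linarith : (0:ℝ) ≤ 1 - τ) h0.le (by ring)
    have heq : (1 - τ) • a + τ • b = a + τ • v := by rw [hv]; module
    rw [heq] at hcvx
    rw [smul_eq_mul, smul_eq_mul] at hcvx
    rw [slope_def_field]
    simp only [zero_smul, add_zero, sub_zero]
    rw [div_le_iff₀ h0]
    nlinarith
  have := le_of_tendsto htend hbound
  linarith

lemma fista_descent_lemma (β : ℝ) (hβ : 0 < β) (f : X → ℝ) (f' : X → X)
    (hf' : ∀ x, HasGradientAt f (f' x) x) (hlip : LipschitzWith (Real.toNNReal β) f')
    (a b : X) :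
    f b ≤ f a + ⟪f' a, b - a⟫ + β / 2 * ‖b - a‖ ^ 2 := by
  set v := b - a with hv
  set h : ℝ → ℝ := fun τ => f (a + τ • v) - τ * ⟪f' a, v⟫ - β / 2 * τ ^ 2 * ‖v‖ ^ 2 with hh
  have hd : ∀ τ : ℝ, HasDerivAt h (⟪f' (a + τ • v), v⟫ - ⟪f' a, v⟫ - β * τ * ‖v‖ ^ 2) τ := by
    intro τ
    have h1 := fista_line_hasDerivAt f f' hf' a v τ
    have h2 : HasDerivAt (fun τ : ℝ => τ * ⟪f' a, v⟫) ⟪f' a, v⟫ τ := by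
      simpa using (hasDerivAt_id τ).mul_const (⟪f' a, v⟫)
    have h3 : HasDerivAt (fun τ : ℝ => β / 2 * τ ^ 2 * ‖v‖ ^ 2) (β * τ * ‖v‖ ^ 2) τ := by
      have := ((hasDerivAt_pow 2 τ).const_mul (β / 2)).mul_const (‖v‖ ^ 2)
      exact this.congr_deriv (by push_cast; ring)
    exact (h1.sub h2).sub h3
  have hmono : AntitoneOn h (Set.Icc 0 1) := by
    apply antitoneOn_of_deriv_nonpos (convex_Icc 0 1)
    · exact fun τ _ => ((hd τ).differentiableAt).continuousAt.continuousWithinAt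
    · intro τ _
      exact ((hd τ).differentiableAt).differentiableWithinAt
    · intro τ hτ
      rw [interior_Icc] at hτ
      rw [(hd τ).deriv]
      have hip : ⟪f' (a + τ • v) - f' a, v⟫ ≤ ‖f' (a + τ • v) - f' a‖ * ‖v‖ :=
        real_inner_le_norm _ _
      have hlipb : ‖f' (a + τ • v) - f' a‖ ≤ β * (τ * ‖v‖) := by
        have := hlip.dist_le_mul (a + τ • v) a
        rw [dist_eq_norm, dist_eq_norm] at this
        simp only [add_sub_cancel_left] at this
        rw [norm_smul, Real.norm_eq_abs, abs_of_pos hτ.1] at this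
        rwa [Real.coe_toNNReal _ hβ.le] at this
      have hsub : ⟪f' (a + τ • v) - f' a, v⟫ = ⟪f' (a + τ • v), v⟫ - ⟪f' a, v⟫ :=
        inner_sub_left _ _ _
      nlinarith [norm_nonneg v, mul_le_mul_of_nonneg_right hlipb (norm_nonneg v)]
  have h10 : h 1 ≤ h 0 :=
    hmono (Set.left_mem_Icc.2 zero_le_one) (Set.right_mem_Icc.2 zero_le_one) zero_le_one
  have e0 : h 0 = f a := by simp [hh]
  have e1 : h 1 = f b - ⟪f' a, v⟫ - β / 2 * ‖v‖ ^ 2 := by simp [hh, hv]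
  rw [e0, e1] at h10
  linarith

lemma fista_key (β : ℝ) (hβ : 0 < β)
    (f : X → ℝ)
    (g : X → EReal)
    (hgconv : ∀ x y : X, ∀ a b : ℝ, 0 ≤ a → 0 ≤ b → a + b = 1 →
      g (a • x + b • y) ≤ (a : EReal) * g x + (b : EReal) * g y)
    (f' : X → X)
    (T : X → X)
    (hT : ∀ y u : X,
      g (T y) + (((β / 2) * ‖T y - (y - β⁻¹ • f' y)‖ ^ 2 : ℝ) : EReal)
        ≤ g u + (((β / 2) * ‖u - (y - β⁻¹ • f' y)‖ ^ 2 : ℝ) : EReal))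
    (hcvx : ∀ a b : X, f a + ⟪f' a, b - a⟫ ≤ f b)
    (hdesc : ∀ a b : X, f b ≤ f a + ⟪f' a, b - a⟫ + β / 2 * ‖b - a‖ ^ 2)
    (y u : X) (Gp Gu : ℝ) (hGp : g (T y) = (Gp : EReal)) (hGu : g u = (Gu : EReal)) :
    f (T y) + Gp ≤ f u + Gu + β / 2 * (‖u - y‖ ^ 2 - ‖u - T y‖ ^ 2) := by
  set p := T y with hp
  set w := y - β⁻¹ • f' y with hwdef
  have hsub : Gp ≤ Gu + β * ⟪p - w, u - p⟫ := by
    have hstep : ∀ lam : ℝ, 0 < lam → lam ≤ 1 →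
        Gp ≤ Gu + β * ⟪p - w, u - p⟫ + lam * (β / 2 * ‖u - p‖ ^ 2) := by
      intro lam h0 h1
      have hconv := hgconv p u (1 - lam) lam (by linarith) h0.le (by ring)
      have hmin := hT y ((1 - lam) • p + lam • u)
      rw [← hp, ← hwdef] at hmin
      rw [hGp] at hconv hmin
      rw [hGu] at hconv
      rw [show ((1 - lam : ℝ) : EReal) * (Gp : EReal) + (lam : EReal) * (Gu : EReal)
            = (((1 - lam) * Gp + lam * Gu : ℝ) : EReal) by
          rw [← EReal.coe_mul, ← EReal.coe_mul, ← EReal.coe_add]] at hconv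
      have hchain : ((Gp + β / 2 * ‖p - w‖ ^ 2 : ℝ) : EReal)
          ≤ (((1 - lam) * Gp + lam * Gu
              + β / 2 * ‖(1 - lam) • p + lam • u - w‖ ^ 2 : ℝ) : EReal) := by
        rw [EReal.coe_add, EReal.coe_add]
        calc (Gp : EReal) + ((β / 2 * ‖p - w‖ ^ 2 : ℝ) : EReal)
            ≤ g ((1 - lam) • p + lam • u)
              + ((β / 2 * ‖(1 - lam) • p + lam • u - w‖ ^ 2 : ℝ) : EReal) := hmin
          _ ≤ (((1 - lam) * Gp + lam * Gu : ℝ) : EReal)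
              + ((β / 2 * ‖(1 - lam) • p + lam • u - w‖ ^ 2 : ℝ) : EReal) :=
              add_le_add_left hconv _
      have hre : Gp + β / 2 * ‖p - w‖ ^ 2
          ≤ (1 - lam) * Gp + lam * Gu + β / 2 * ‖(1 - lam) • p + lam • u - w‖ ^ 2 :=
        EReal.coe_le_coe_iff.1 hchain
      have hvec : (1 - lam) • p + lam • u - w = (p - w) + lam • (u - p) := by module
      have hnorm : ‖(p - w) + lam • (u - p)‖ ^ 2
          = ‖p - w‖ ^ 2 + 2 * (lam * ⟪p - w, u - p⟫) + lam ^ 2 * ‖u - p‖ ^ 2 := by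
        rw [norm_add_sq_real, real_inner_smul_right, norm_smul, Real.norm_eq_abs,
          abs_of_pos h0, mul_pow]
      rw [hvec, hnorm] at hre
      have hmul : lam * Gp ≤ lam * (Gu + β * ⟪p - w, u - p⟫ + lam * (β / 2 * ‖u - p‖ ^ 2)) := by
        nlinarith
      exact le_of_mul_le_mul_left (by linarith [hmul]) h0
    refine le_of_forall_pos_le_add ?_
    intro ε hε
    set C := β / 2 * ‖u - p‖ ^ 2 with hC
    have hC0 : 0 ≤ C := by positivity
    have hlam0 : 0 < min 1 (ε / (C + 1)) := lt_min one_pos (by positivity)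
    have := hstep (min 1 (ε / (C + 1))) hlam0 (min_le_left _ _)
    have hle : min 1 (ε / (C + 1)) * C ≤ ε := by
      have h2 : min 1 (ε / (C + 1)) ≤ ε / (C + 1) := min_le_right _ _
      have h3 : min 1 (ε / (C + 1)) * C ≤ (ε / (C + 1)) * C :=
        mul_le_mul_of_nonneg_right h2 hC0
      have h4 : (ε / (C + 1)) * C ≤ ε := by
        rw [div_mul_eq_mul_div, div_le_iff₀ (by linarith)]
        nlinarith
      linarith
    linarith
  have hc := hcvx y u
  have hd := hdesc y p
  have e1 : u - y = (u - p) + (p - y) := by abel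
  have I3 : ‖u - y‖ ^ 2 = ‖u - p‖ ^ 2 + 2 * ⟪u - p, p - y⟫ + ‖p - y‖ ^ 2 := by
    rw [e1, norm_add_sq_real]
  have I3' : β / 2 * (‖u - y‖ ^ 2 - ‖u - p‖ ^ 2)
      = β * ⟪p - y, u - p⟫ + β / 2 * ‖p - y‖ ^ 2 := by
    rw [I3, real_inner_comm]; ring
  have hpw : p - w = (p - y) + β⁻¹ • f' y := by rw [hwdef]; abel
  have I1' : β * ⟪p - w, u - p⟫ = β * ⟪p - y, u - p⟫ + ⟪f' y, u - p⟫ := by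
    rw [hpw, inner_add_left, real_inner_smul_left]
    field_simp
  have I5 : ⟪f' y, u - y⟫ = ⟪f' y, u - p⟫ + ⟪f' y, p - y⟫ := by
    rw [e1, inner_add_right]
  linarith [hsub, hc, hd, I1', I3', I5]

end Helpers

theorem fista_lyapunov_monotone
    {X : Type*} [NormedAddCommGroup X] [InnerProductSpace ℝ X] [CompleteSpace X]
    (β : ℝ) (hβ : 0 < β)
    (f : X → ℝ) (hf : ConvexOn ℝ Set.univ f)
    (f' : X → X) (hf' : ∀ x, HasGradientAt f (f' x) x)
    (hlip : LipschitzWith (Real.toNNReal β) f')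
    (g : X → EReal)
    (hgconv : ∀ x y : X, ∀ a b : ℝ, 0 ≤ a → 0 ≤ b → a + b = 1 →
      g (a • x + b • y) ≤ (a : EReal) * g x + (b : EReal) * g y)
    (hglsc : LowerSemicontinuous g)
    (hg_ne_bot : ∀ x, g x ≠ ⊥) (hg_proper : ∃ x, g x ≠ ⊤)
    (T : X → X)
    (hT : ∀ y u : X,
      g (T y) + (((β / 2) * ‖T y - (y - β⁻¹ • f' y)‖ ^ 2 : ℝ) : EReal)
        ≤ g u + (((β / 2) * ‖u - (y - β⁻¹ • f' y)‖ ^ 2 : ℝ) : EReal))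
    (F : X → EReal) (hF : ∀ x, F x = (f x : EReal) + g x)
    -- the parameter sequence
    (t : ℕ → ℝ) (htpos : ∀ k, 0 < t k) (ht0 : t 0 = 1)
    (htlow : ∀ k : ℕ, ((k : ℝ) + 2) / 2 ≤ t k)
    (htrec : ∀ k : ℕ, (t (k + 1)) ^ 2 - t (k + 1) ≤ (t k) ^ 2)
    -- the FISTA iterates and the auxiliary sequence
    (x y z : ℕ → X) (hy0 : y 0 = x 0)
    (hx : ∀ k : ℕ, x (k + 1) = T (y k))
    (hy : ∀ k : ℕ, y (k + 1) = x (k + 1) + ((t k - 1) / t (k + 1)) • (x (k + 1) - x k))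
    (hz : ∀ k : ℕ, z k = (1 - t k) • x k + t k • y k)
    -- a minimizer s and the minimal value μ
    (s : X) (hs : ∀ v : X, F s ≤ F v)
    (μ : ℝ) (hμ : (μ : EReal) = F s)
    -- the Lyapunov quantities ξ_k for k ≥ 1
    (ξ : ℕ → EReal)
    (hξ : ∀ k : ℕ, 1 ≤ k →
      ξ k = (((t (k - 1)) ^ 2 : ℝ) : EReal) * (F (x k) - (μ : EReal))
              + (((β / 2) * ‖z k - s‖ ^ 2 : ℝ) : EReal)) :
    (∀ k : ℕ, 1 ≤ k → 0 ≤ ξ k) ∧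
    (∀ k : ℕ, 1 ≤ k → ξ (k + 1) ≤ ξ k) ∧
    ξ 1 ≤ (((β / 2) * ‖x 0 - s‖ ^ 2 : ℝ) : EReal) ∧
    (∃ l : EReal, Tendsto (fun k : ℕ => ξ (k + 1)) atTop (nhds l)) ∧
    (∃ M : ℝ, ∀ k : ℕ, ‖z k‖ ≤ M) := by
  classical
  have hcvx : ∀ a b : X, f a + ⟪f' a, b - a⟫ ≤ f b := fista_convex_grad_ineq f hf f' hf'
  have hdesc : ∀ a b : X, f b ≤ f a + ⟪f' a, b - a⟫ + β / 2 * ‖b - a‖ ^ 2 :=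
    fista_descent_lemma β hβ f f' hf' hlip
  obtain ⟨u₀, hu₀⟩ := hg_proper
  -- g (T yy) is finite
  have hgT : ∀ yy : X, ∃ r : ℝ, g (T yy) = (r : EReal) := by
    intro yy
    refine ⟨(g (T yy)).toReal, (EReal.coe_toReal ?_ (hg_ne_bot _)).symm⟩
    intro htop
    obtain ⟨r₀, hr₀⟩ : ∃ r₀ : ℝ, g u₀ = (r₀ : EReal) :=
      ⟨(g u₀).toReal, (EReal.coe_toReal hu₀ (hg_ne_bot _)).symm⟩
    have h1 := hT yy u₀
    rw [htop, hr₀, ← EReal.coe_add, EReal.top_add_coe] at h1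
    exact (EReal.coe_ne_top _) (top_le_iff.1 h1)
  set Gr : X → ℝ := fun u => (g u).toReal with hGr
  have htone : ∀ k : ℕ, 1 ≤ t k := by
    intro k
    have := htlow k
    have : ((k : ℝ) + 2) / 2 ≥ 1 := by
      have : (0:ℝ) ≤ (k : ℝ) := Nat.cast_nonneg k
      linarith
    linarith [htlow k]
  have hGfin : ∀ k : ℕ, g (x (k + 1)) = ((Gr (x (k + 1)) : ℝ) : EReal) := by
    intro k
    rw [hx k]
    obtain ⟨r, hr⟩ := hgT (y k)
    rw [hr]
    simp [hGr, hr]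
  have hFs : (μ : EReal) = (f s : EReal) + g s := by rw [hμ, hF s]
  have hgs_ne_top : g s ≠ ⊤ := by
    intro h
    rw [h] at hFs
    rw [EReal.coe_add_top] at hFs
    exact (EReal.coe_ne_top μ) hFs
  have hgs : g s = ((Gr s : ℝ) : EReal) := by
    simp only [hGr]
    exact (EReal.coe_toReal hgs_ne_top (hg_ne_bot s)).symm
  have hμs : μ = f s + Gr s := by
    rw [hgs, ← EReal.coe_add] at hFs
    exact_mod_cast hFs
  have hμmin : ∀ (u : X) (r : ℝ), g u = (r : EReal) → μ ≤ f u + r := by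
    intro u r hr
    have h := hs u
    rw [← hμ, hF u, hr, ← EReal.coe_add] at h
    exact_mod_cast h
  have key : ∀ (yy u : X) (r : ℝ), g u = (r : EReal) →
      f (T yy) + Gr (T yy) ≤ f u + r + β / 2 * (‖u - yy‖ ^ 2 - ‖u - T yy‖ ^ 2) := by
    intro yy u r hr
    obtain ⟨q, hq⟩ := hgT yy
    have hGrq : Gr (T yy) = q := by simp [hGr, hq]
    rw [hGrq]
    exact fista_key β hβ f g hgconv f' T hT hcvx hdesc yy u q r hq hr
  have hznext : ∀ k : ℕ, z (k + 1) = t k • x (k + 1) + (1 - t k) • x k := by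
    intro k
    have ht1 : t (k + 1) ≠ 0 := (htpos (k + 1)).ne'
    rw [hz (k + 1), hy k]
    match_scalars <;> field_simp <;> ring
  have hz1 : z 1 = x 1 := by rw [hznext 0, ht0]; simp
  have hz0 : z 0 = x 0 := by rw [hz 0, ht0, hy0]; simp
  have hvpos : ∀ k : ℕ, 0 ≤ f (x (k + 1)) + Gr (x (k + 1)) - μ := by
    intro k
    have := hμmin (x (k + 1)) (Gr (x (k + 1))) (hGfin k)
    linarith
  set ρ : ℕ → ℝ := fun k =>
    (t k) ^ 2 * (f (x (k + 1)) + Gr (x (k + 1)) - μ) + β / 2 * ‖z (k + 1) - s‖ ^ 2 with hρ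
  -- the main one-step estimate
  have hstep : ∀ (j : ℕ) (r : ℝ), g (x j) = (r : EReal) →
      (t j) ^ 2 * (f (x (j + 1)) + Gr (x (j + 1)) - μ) + β / 2 * ‖z (j + 1) - s‖ ^ 2
        ≤ ((t j) ^ 2 - t j) * (f (x j) + r - μ) + β / 2 * ‖z j - s‖ ^ 2 := by
    intro j r hr
    have hτ1 : 1 ≤ t j := htone j
    have hτ0 : 0 < t j := htpos j
    have hτne : t j ≠ 0 := hτ0.ne'
    set lam := 1 / t j with hlam
    have hlam0 : 0 < lam := by positivity
    have hlam1 : lam ≤ 1 := by rw [hlam, div_le_one hτ0]; exact hτ1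
    set u : X := (1 - lam) • x j + lam • s with hu
    have hgu := hgconv (x j) s (1 - lam) lam (by linarith) hlam0.le (by ring)
    rw [hr, hgs] at hgu
    rw [show ((1 - lam : ℝ) : EReal) * ((r : ℝ) : EReal)
          + ((lam : ℝ) : EReal) * ((Gr s : ℝ) : EReal)
          = (((1 - lam) * r + lam * Gr s : ℝ) : EReal) by
        rw [← EReal.coe_mul, ← EReal.coe_mul, ← EReal.coe_add]] at hgu
    have hgu_ne_top : g u ≠ ⊤ := by
      intro h
      rw [h] at hgu
      exact (EReal.coe_ne_top _) (top_le_iff.1 hgu)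
    have hguc : g u = ((Gr u : ℝ) : EReal) := by
      simp only [hGr]
      exact (EReal.coe_toReal hgu_ne_top (hg_ne_bot u)).symm
    have hGru : Gr u ≤ (1 - lam) * r + lam * Gr s := by
      have h := EReal.toReal_le_toReal hgu (hg_ne_bot u) (EReal.coe_ne_top _)
      rw [EReal.toReal_coe] at h
      simpa [hGr] using h
    have hfu : f u ≤ (1 - lam) * f (x j) + lam * f s := by
      have h := hf.2 (Set.mem_univ (x j)) (Set.mem_univ s)
        (by linarith : (0:ℝ) ≤ 1 - lam) hlam0.le (by ring)
      simpa [hu, smul_eq_mul] using h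
    have K := key (y j) u (Gr u) hguc
    rw [← hx j] at K
    have hA : z j - s = t j • (y j - u) := by
      rw [hz j, hu, hlam]
      match_scalars <;> field_simp <;> ring
    have hB : z (j + 1) - s = t j • (x (j + 1) - u) := by
      rw [hznext j, hu, hlam]
      match_scalars <;> field_simp <;> ring
    have hnA : ‖z j - s‖ ^ 2 = (t j) ^ 2 * ‖u - y j‖ ^ 2 := by
      rw [hA, norm_smul, Real.norm_eq_abs, abs_of_pos hτ0, mul_pow, norm_sub_rev]
    have hnB : ‖z (j + 1) - s‖ ^ 2 = (t j) ^ 2 * ‖u - x (j + 1)‖ ^ 2 := by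
      rw [hB, norm_smul, Real.norm_eq_abs, abs_of_pos hτ0, mul_pow, norm_sub_rev]
    have hlamμ : lam * μ = lam * f s + lam * Gr s := by rw [hμs]; ring
    have K2 : f (x (j + 1)) + Gr (x (j + 1)) - μ
        ≤ (1 - lam) * (f (x j) + r - μ)
          + β / 2 * (‖u - y j‖ ^ 2 - ‖u - x (j + 1)‖ ^ 2) := by
      nlinarith [K, hfu, hGru, hlamμ]
    have hmul := mul_le_mul_of_nonneg_left K2 (le_of_lt (pow_pos hτ0 2))
    have hexp : (t j) ^ 2 * ((1 - lam) * (f (x j) + r - μ)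
          + β / 2 * (‖u - y j‖ ^ 2 - ‖u - x (j + 1)‖ ^ 2))
        = ((t j) ^ 2 - t j) * (f (x j) + r - μ)
          + β / 2 * ((t j) ^ 2 * ‖u - y j‖ ^ 2) - β / 2 * ((t j) ^ 2 * ‖u - x (j + 1)‖ ^ 2) := by
      rw [hlam]; field_simp; ring
    rw [hexp] at hmul
    rw [hnA, hnB]
    linarith
  have hstep0 : ρ 0 ≤ β / 2 * ‖x 0 - s‖ ^ 2 := by
    have K := key (y 0) s (Gr s) hgs
    rw [← hx 0, hy0] at K
    have h1 : ‖s - x 0‖ = ‖x 0 - s‖ := norm_sub_rev _ _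
    have h2 : ‖s - x 1‖ = ‖x 1 - s‖ := norm_sub_rev _ _
    rw [h1, h2] at K
    simp only [hρ]
    rw [hz1, ht0]
    have hμval := hμs
    nlinarith [K]
  have hmono : ∀ k : ℕ, ρ (k + 1) ≤ ρ k := by
    intro k
    have h1 := hstep (k + 1) (Gr (x (k + 1))) (hGfin k)
    have h2 := mul_le_mul_of_nonneg_right (htrec k) (hvpos k)
    simp only [hρ]
    linarith
  have hρ0 : ∀ k : ℕ, 0 ≤ ρ k := by
    intro k
    have h1 := mul_nonneg (sq_nonneg (t k)) (hvpos k)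
    have h2 : (0:ℝ) ≤ β / 2 * ‖z (k + 1) - s‖ ^ 2 := by positivity
    simp only [hρ]
    nlinarith
  have hanti : Antitone ρ := antitone_nat_of_succ_le hmono
  have hξρ : ∀ k : ℕ, ξ (k + 1) = ((ρ k : ℝ) : EReal) := by
    intro k
    rw [hξ (k + 1) (Nat.le_add_left 1 k)]
    simp only [Nat.add_sub_cancel]
    rw [hF (x (k + 1)), hGfin k]
    rw [show ((f (x (k + 1)) : ℝ) : EReal) + ((Gr (x (k + 1)) : ℝ) : EReal)
          = ((f (x (k + 1)) + Gr (x (k + 1)) : ℝ) : EReal) from (EReal.coe_add _ _).symm]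
    rw [show ((f (x (k + 1)) + Gr (x (k + 1)) : ℝ) : EReal) - ((μ : ℝ) : EReal)
          = ((f (x (k + 1)) + Gr (x (k + 1)) - μ : ℝ) : EReal) from (EReal.coe_sub _ _).symm]
    rw [← EReal.coe_mul, ← EReal.coe_add]
  refine ⟨?_, ?_, ?_, ?_, ?_⟩
  · intro k hk
    obtain ⟨m, rfl⟩ : ∃ m, k = m + 1 := ⟨k - 1, by omega⟩
    rw [hξρ m]
    exact_mod_cast hρ0 m
  · intro k hk
    obtain ⟨m, rfl⟩ : ∃ m, k = m + 1 := ⟨k - 1, by omega⟩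
    rw [hξρ (m + 1), hξρ m]
    exact EReal.coe_le_coe_iff.2 (hmono m)
  · rw [hξρ 0]
    exact EReal.coe_le_coe_iff.2 hstep0
  · refine ⟨((⨅ k, ρ k : ℝ) : EReal), ?_⟩
    have hbdd : BddBelow (Set.range ρ) := ⟨0, by rintro r ⟨k, rfl⟩; exact hρ0 k⟩
    have htd : Tendsto ρ atTop (nhds (⨅ k, ρ k)) := tendsto_atTop_ciInf hanti hbdd
    have h := EReal.tendsto_coe.2 htd
    exact h.congr fun k => (hξρ k).symm
  · refine ⟨‖x 0‖ + ‖x 0 - s‖ + ‖s‖, ?_⟩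
    intro k
    cases k with
    | zero =>
      rw [hz0]
      have := norm_nonneg (x 0 - s)
      have := norm_nonneg s
      linarith
    | succ m =>
      have h1 : β / 2 * ‖z (m + 1) - s‖ ^ 2 ≤ ρ m := by
        have := mul_nonneg (sq_nonneg (t m)) (hvpos m)
        simp only [hρ]
        linarith
      have h2 : ρ m ≤ ρ 0 := hanti (Nat.zero_le m)
      have hchain : β / 2 * ‖z (m + 1) - s‖ ^ 2 ≤ β / 2 * ‖x 0 - s‖ ^ 2 :=
        le_trans h1 (le_trans h2 hstep0)
      have hb2 : (0:ℝ) < β / 2 := by positivity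
      have h3 : ‖z (m + 1) - s‖ ^ 2 ≤ ‖x 0 - s‖ ^ 2 := (mul_le_mul_iff_right₀ hb2).1 hchain
      have h4 : ‖z (m + 1) - s‖ ≤ ‖x 0 - s‖ := by
        have hsq := Real.sqrt_le_sqrt h3
        rwa [Real.sqrt_sq (norm_nonneg _), Real.sqrt_sq (norm_nonneg _)] at hsq
      have h5 : ‖z (m + 1)‖ ≤ ‖z (m + 1) - s‖ + ‖s‖ := by
        calc ‖z (m + 1)‖ = ‖(z (m + 1) - s) + s‖ := by rw [sub_add_cancel]
          _ ≤ ‖z (m + 1) - s‖ + ‖s‖ := norm_add_le _ _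
      have := norm_nonneg (x 0)
      linarith
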